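/- Let (p_d(t)), (p_c(t)), (p_n(t)) be real sequences indexed by positive integers with p_d(t), p_c(t), p_n(t) ≥ 0 and p_d(t)+p_c(t)+p_n(t)=1 for all t, with p_d and p_c nondecreasing and p_n nonincreasing. Fix penalties d, c ≥ 0 and define the family of values W(t,j) by W(t,0)=1 and W(t,j+1) = 1 - d·p_d(t+1) - c·p_c(t+1) + p_n(t+1)·W(t+1,j). Then for every t and j, if W(t,j) ≥ W(t,j+1) then W(t+1,j) ≥ W(t+1,j+1). -/

import Mathlib

theorem stmt_0
    (pd pc pn : ℕ → ℝ)
    (hpd : ∀ t, 0 ≤ pd t) (hpc : ∀ t, 0 ≤ pc t) (hpn : ∀ t, 0 ≤ pn t)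
    (hsum : ∀ t, pd t + pc t + pn t = 1)
    (hpd_mono : Monotone pd) (hpc_mono : Monotone pc) (hpn_anti : Antitone pn)
    (d c : ℝ) (hd : 0 ≤ d) (hc : 0 ≤ c)
    (W : ℕ → ℕ → ℝ)
    (hW0 : ∀ t, W t 0 = 1)
    (hWs : ∀ t j, W t (j + 1) = 1 - d * pd (t + 1) - c * pc (t + 1) + pn (t + 1) * W (t + 1) j) :
    ∀ t j, W t j ≥ W t (j + 1) → W (t + 1) j ≥ W (t + 1) (j + 1) := by
  intro t j
  induction j generalizing t with
  | zero =>
    intro h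
    rw [hW0, hWs, hW0] at h
    rw [hW0, hWs, hW0]
    have h1 : d * pd (t+1) ≤ d * pd (t+2) :=
      mul_le_mul_of_nonneg_left (hpd_mono (by omega)) hd
    have h2 : c * pc (t+1) ≤ c * pc (t+2) :=
      mul_le_mul_of_nonneg_left (hpc_mono (by omega)) hc
    have h3 : pn (t+2) ≤ pn (t+1) := hpn_anti (by omega)
    linarith
  | succ j ih =>
    intro h
    rw [hWs t (j+1), hWs t j] at h
    rw [hWs (t+1) (j+1), hWs (t+1) j]
    rcases eq_or_lt_of_le (hpn (t+1)) with h0 | h0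
    · have h4 : pn (t+2) = 0 :=
        le_antisymm (h0 ▸ hpn_anti (by omega : t+1 ≤ t+2)) (hpn (t+2))
      rw [h4]; linarith
    · have hW : W (t+1) j ≥ W (t+1) (j+1) :=
        (mul_le_mul_iff_right₀ h0).mp (by linarith)
      have h5 := ih (t+1) hW
      have h6 := mul_le_mul_of_nonneg_left h5 (hpn (t+2))
      linarith
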